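/- Let ∇ ⊂ ℝ³ be the polytope defined by 0 ≤ x,y,z ≤ 1, x+y-z ≥ 0, 1-x-y+z ≥ 0. For every positive integer n, the number of lattice points in n∇ equals C(n+3,3) + 2·C(n+2,3) + C(n+1,3) = (4n³ + 12n² + 14n + 6)/6. -/

import Mathlib

open Pointwise Finset

def nabla : Set (ℝ × ℝ × ℝ) :=
  {p : ℝ × ℝ × ℝ |
    0 ≤ p.1 ∧
    p.1 ≤ 1 ∧
    0 ≤ p.2.1 ∧
    p.2.1 ≤ 1 ∧
    0 ≤ p.2.2 ∧
    p.2.2 ≤ 1 ∧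
    0 ≤ p.1 + p.2.1 - p.2.2 ∧
    0 ≤ 1 - p.1 - p.2.1 + p.2.2}

def Dsum (m : ℕ) : ℕ := ∑ a ∈ range m, ∑ b ∈ range m, Nat.dist a b

def Tn (n : ℕ) : Finset (ℕ × ℕ × ℕ) :=
  ((range (n+1)) ×ˢ (range (n+1)) ×ˢ (range (n+1))).filter
    (fun p => p.2.2 ≤ p.1 + p.2.1 ∧ p.1 + p.2.1 ≤ p.2.2 + n)

noncomputable def Tz (n : ℕ) : Finset (ℤ × ℤ × ℤ) :=
  ((Finset.Icc 0 (n:ℤ)) ×ˢ (Finset.Icc 0 (n:ℤ)) ×ˢ (Finset.Icc 0 (n:ℤ))).filter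
    (fun p => 0 ≤ p.1 + p.2.1 - p.2.2 ∧ p.1 + p.2.1 - p.2.2 ≤ (n:ℤ))

lemma card_Tz_eq_Tn (n : ℕ) : (Tz n).card = (Tn n).card := by
  apply Finset.card_bij' (i := fun (p : ℤ × ℤ × ℤ) (_ : p ∈ Tz n) =>
      (p.1.toNat, p.2.1.toNat, p.2.2.toNat))
    (j := fun (q : ℕ × ℕ × ℕ) (_ : q ∈ Tn n) => ((q.1 : ℤ), (q.2.1 : ℤ), (q.2.2 : ℤ)))
  · rintro ⟨a, b, c⟩ h
    simp only [Tz, Tn, Finset.mem_filter, Finset.mem_product, Finset.mem_Icc,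
      Finset.mem_range, Nat.lt_succ_iff] at *
    omega
  · rintro ⟨a, b, c⟩ h
    simp only [Tz, Tn, Finset.mem_filter, Finset.mem_product, Finset.mem_Icc,
      Finset.mem_range, Nat.lt_succ_iff] at *
    omega
  · rintro ⟨a, b, c⟩ h
    simp only [Tz, Finset.mem_filter, Finset.mem_product, Finset.mem_Icc] at h
    simp only [Prod.mk.injEq]
    omega
  · rintro ⟨a, b, c⟩ h
    simp only [Prod.mk.injEq, Int.toNat_natCast]

lemma sum_dist_left (m : ℕ) : 2 * ∑ b ∈ range (m + 1), Nat.dist m b = m * (m + 1) := by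
  have h : ∀ b ∈ range (m + 1), Nat.dist m b = m - b := by
    intro b hb; simp only [mem_range] at hb; simp [Nat.dist]; omega
  rw [Finset.sum_congr rfl h]
  have h2 : ∑ b ∈ range (m + 1), (m - b) = ∑ b ∈ range (m + 1), b := by
    have := Finset.sum_range_reflect (fun j => j) (m + 1)
    simpa using this
  rw [h2, mul_comm, Finset.sum_range_id_mul_two]
  simp [Nat.mul_comm]

lemma dsum_succ (m : ℕ) : Dsum (m + 1) =
    Dsum m + (∑ b ∈ range (m + 1), Nat.dist m b) + ∑ a ∈ range m, Nat.dist a m := by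
  unfold Dsum
  rw [Finset.sum_range_succ]
  have h : ∀ a, ∑ b ∈ range (m + 1), Nat.dist a b
      = (∑ b ∈ range m, Nat.dist a b) + Nat.dist a m := fun a => Finset.sum_range_succ _ _
  rw [Finset.sum_congr rfl fun a _ => h a, Finset.sum_add_distrib]
  ring

lemma dsum3 : ∀ m : ℕ, 3 * Dsum (m + 1) = m * (m + 1) * (m + 2) := by
  intro m
  induction m with
  | zero => simp [Dsum]
  | succ k ih =>
    rw [dsum_succ]
    have h1 := sum_dist_left (k + 1)
    have h2 : 2 * ∑ a ∈ range (k + 1), Nat.dist a (k + 1) = (k + 1) * (k + 2) := by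
      have h : ∀ a ∈ range (k + 1), Nat.dist a (k + 1) = (k + 1) - a := by
        intro a ha; simp only [mem_range] at ha; simp [Nat.dist]; omega
      rw [Finset.sum_congr rfl h]
      have h3 : ∀ a ∈ range (k + 1), (k + 1) - a = (k - a) + 1 := by
        intro a ha; simp only [mem_range] at ha; omega
      rw [Finset.sum_congr rfl h3, Finset.sum_add_distrib]
      have h4 : ∑ b ∈ range (k + 1), (k - b) = ∑ b ∈ range (k + 1), b := by
        have := Finset.sum_range_reflect (fun j => j) (k + 1)
        simpa using this
      rw [h4]
      have h5 := Finset.sum_range_id_mul_two (k + 1)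
      simp only [Finset.sum_const, Finset.card_range, smul_eq_mul] at *
      simp only [Nat.add_sub_cancel] at h5
      nlinarith [h5]
    nlinarith [ih, h1, h2]

lemma inner_count (n a b : ℕ) :
    (∑ c ∈ range (n+1), if c ≤ a + b ∧ a + b ≤ c + n then 1 else 0)
      = min (a+b) n + 1 - (a + b - n) := by
  rw [← Finset.card_filter]
  have h : (range (n+1)).filter (fun c => c ≤ a + b ∧ a + b ≤ c + n)
      = Finset.Icc (a + b - n) (min (a+b) n) := by
    ext c; simp only [mem_filter, mem_range, Nat.lt_succ_iff, mem_Icc]; omega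
  rw [h, Nat.card_Icc]

lemma Tn_card (n : ℕ) :
    (Tn n).card = ∑ a ∈ range (n+1), ∑ b ∈ range (n+1), (n + 1 - Nat.dist a b) := by
  unfold Tn
  rw [Finset.card_filter, Finset.sum_product]
  refine Finset.sum_congr rfl fun a ha => ?_
  rw [Finset.sum_product]
  have step : ∀ b ∈ range (n+1),
      (∑ c ∈ range (n+1), if (fun p : ℕ × ℕ × ℕ => p.2.2 ≤ p.1 + p.2.1 ∧ p.1 + p.2.1 ≤ p.2.2 + n) (a, b, c) then 1 else 0)
        = min (a+b) n + 1 - (a + b - n) := by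
    intro b _; exact inner_count n a b
  rw [Finset.sum_congr rfl step]
  rw [← Finset.sum_range_reflect (fun b => min (a+b) n + 1 - (a + b - n)) (n+1)]
  refine Finset.sum_congr rfl fun b hb => ?_
  simp only [mem_range, Nat.lt_succ_iff] at ha hb
  simp only [Nat.dist]
  omega

lemma N_plus (n : ℕ) : (Tn n).card + Dsum (n+1) = (n+1)^3 := by
  rw [Tn_card]
  unfold Dsum
  rw [← Finset.sum_add_distrib]
  have h : ∀ a ∈ range (n+1),
      ((∑ b ∈ range (n+1), (n + 1 - Nat.dist a b)) + ∑ b ∈ range (n+1), Nat.dist a b)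
        = (n+1) * (n+1) := by
    intro a ha
    rw [← Finset.sum_add_distrib]
    have h2 : ∀ b ∈ range (n+1), (n + 1 - Nat.dist a b) + Nat.dist a b = n + 1 := by
      intro b hb
      simp only [mem_range, Nat.lt_succ_iff] at ha hb
      simp only [Nat.dist]; omega
    rw [Finset.sum_congr rfl h2]
    simp [mul_comm]
  rw [Finset.sum_congr rfl h]
  simp
  ring

lemma six_N (n : ℕ) : 6 * (Tn n).card = 4*n^3 + 12*n^2 + 14*n + 6 := by
  nlinarith [N_plus n, dsum3 n]

lemma c2 (m : ℕ) : (m+1).choose 2 * 2 = m * (m+1) := by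
  induction m with
  | zero => simp
  | succ k ih =>
    rw [show k+1+1 = k+1+1 from rfl, Nat.choose_succ_succ (k+1) 1, Nat.choose_one_right]
    nlinarith [ih]

lemma c3 (m : ℕ) : (m+2).choose 3 * 6 = m * (m+1) * (m+2) := by
  induction m with
  | zero => simp
  | succ k ih =>
    rw [show k+1+2 = (k+2)+1 from rfl, Nat.choose_succ_succ (k+2) 2]
    nlinarith [ih, c2 (k+1)]

lemma six_choose (n : ℕ) (hn : 0 < n) :
    6 * ((n+3).choose 3 + 2 * (n+2).choose 3 + (n+1).choose 3)
      = 4*n^3 + 12*n^2 + 14*n + 6 := by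
  obtain ⟨k, rfl⟩ : ∃ k, n = k + 1 := ⟨n - 1, by omega⟩
  have h1 := c3 (k+2)
  have h2 := c3 (k+1)
  have h3 := c3 k
  nlinarith [h1, h2, h3]

lemma Tn_card_eq (n : ℕ) (hn : 0 < n) :
    (Tn n).card = (n+3).choose 3 + 2 * (n+2).choose 3 + (n+1).choose 3 := by
  have := six_N n
  have := six_choose n hn
  omega
lemma set_eq (n : ℕ) (hn : 0 < n) :
    {v : ℤ × ℤ × ℤ | (((v.1 : ℝ), (v.2.1 : ℝ), (v.2.2 : ℝ)) : ℝ × ℝ × ℝ) ∈ (n : ℝ) • nabla}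
      = ↑(Tz n) := by
  have hn' : (0:ℝ) < n := by exact_mod_cast hn
  ext ⟨x, y, z⟩
  simp only [Set.mem_setOf_eq, Finset.coe_filter, Tz, Finset.mem_coe, Finset.mem_filter,
    Finset.mem_product, Finset.mem_Icc, Set.mem_smul_set]
  constructor
  · rintro ⟨⟨p1, p2, p3⟩, hp, heq⟩
    obtain ⟨h1, h2, h3, h4, h5, h6, h7, h8⟩ := hp
    have e1 : (x:ℝ) = n * p1 := by
      have := congrArg Prod.fst heq; simpa [Prod.smul_def] using this.symm
    have e2 : (y:ℝ) = n * p2 := by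
      have := congrArg (fun q : ℝ × ℝ × ℝ => q.2.1) heq; simpa [Prod.smul_def] using this.symm
    have e3 : (z:ℝ) = n * p3 := by
      have := congrArg (fun q : ℝ × ℝ × ℝ => q.2.2) heq; simpa [Prod.smul_def] using this.symm
    have r1 : (0:ℝ) ≤ x := by rw [e1]; positivity
    have r2 : (x:ℝ) ≤ n := by rw [e1]; nlinarith
    have r3 : (0:ℝ) ≤ y := by rw [e2]; positivity
    have r4 : (y:ℝ) ≤ n := by rw [e2]; nlinarith
    have r5 : (0:ℝ) ≤ z := by rw [e3]; positivity
    have r6 : (z:ℝ) ≤ n := by rw [e3]; nlinarith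
    have r7 : (0:ℝ) ≤ (x:ℝ) + y - z := by rw [e1, e2, e3]; nlinarith
    have r8 : (x:ℝ) + y - z ≤ n := by rw [e1, e2, e3]; nlinarith
    exact ⟨⟨⟨by exact_mod_cast r1, by exact_mod_cast r2⟩,
      ⟨by exact_mod_cast r3, by exact_mod_cast r4⟩,
      by exact_mod_cast r5, by exact_mod_cast r6⟩,
      by exact_mod_cast r7, by exact_mod_cast r8⟩
  · rintro ⟨⟨⟨h1, h2⟩, ⟨h3, h4⟩, h5, h6⟩, h7, h8⟩
    refine ⟨((x:ℝ)/n, (y:ℝ)/n, (z:ℝ)/n), ?_, ?_⟩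
    · have c1 : (0:ℝ) ≤ x := by exact_mod_cast h1
      have c2 : (x:ℝ) ≤ n := by exact_mod_cast h2
      have c3 : (0:ℝ) ≤ y := by exact_mod_cast h3
      have c4 : (y:ℝ) ≤ n := by exact_mod_cast h4
      have c5 : (0:ℝ) ≤ z := by exact_mod_cast h5
      have c6 : (z:ℝ) ≤ n := by exact_mod_cast h6
      have c7 : (0:ℝ) ≤ (x:ℝ) + y - z := by exact_mod_cast h7
      have c8 : (x:ℝ) + y - z ≤ n := by exact_mod_cast h8
      simp only [nabla, Set.mem_setOf_eq]
      refine ⟨by positivity, ?_, by positivity, ?_, by positivity, ?_, ?_, ?_⟩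
      · rw [div_le_one hn']; exact c2
      · rw [div_le_one hn']; exact c4
      · rw [div_le_one hn']; exact c6
      · have h9 : (0:ℝ) ≤ ((x:ℝ) + y - z) / n := div_nonneg c7 hn'.le
        have h10 : (x:ℝ)/n + y/n - z/n = ((x:ℝ) + y - z) / n := by ring
        rw [h10]; exact h9
      · have h9 : (0:ℝ) ≤ ((n:ℝ) - ((x:ℝ) + y - z)) / n :=
          div_nonneg (by linarith) hn'.le
        have h10 : 1 - (x:ℝ)/n - y/n + z/n = ((n:ℝ) - ((x:ℝ) + y - z)) / n := by
          field_simp; ring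
        rw [h10]; exact h9
    · simp only [Prod.smul_def, smul_eq_mul, Prod.mk.injEq]
      refine ⟨?_, ?_, ?_⟩ <;> field_simp

theorem stmt5 (n : ℕ) (hn : 0 < n) :
    {v : ℤ × ℤ × ℤ | (((v.1 : ℝ), (v.2.1 : ℝ), (v.2.2 : ℝ)) : ℝ × ℝ × ℝ) ∈ (n : ℝ) • nabla}.ncard
        = Nat.choose (n + 3) 3 + 2 * Nat.choose (n + 2) 3 + Nat.choose (n + 1) 3 ∧
      ((Nat.choose (n + 3) 3 + 2 * Nat.choose (n + 2) 3 + Nat.choose (n + 1) 3 : ℚ))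
        = (4 * (n : ℚ) ^ 3 + 12 * (n : ℚ) ^ 2 + 14 * (n : ℚ) ^ 1 + 6) / 6 := by
  constructor
  · rw [set_eq n hn, Set.ncard_coe_finset, card_Tz_eq_Tn, Tn_card_eq n hn]
  · have h := six_choose n hn
    have h' : (6 : ℚ) * ((n+3).choose 3 + 2 * (n+2).choose 3 + (n+1).choose 3)
        = 4*(n:ℚ)^3 + 12*(n:ℚ)^2 + 14*(n:ℚ) + 6 := by exact_mod_cast h
    rw [eq_div_iff (by norm_num : (6:ℚ) ≠ 0)]
    push_cast at h' ⊢
    linarith [h']
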